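/- arXiv:2303.12373 — 5 statements merged into one kernel-verified Lean document; each statement's English description precedes it below -/
import Mathlib

section
/- Let a, b, c, d be formal power series over ℂ with b(0) = 0 and d(0) = 0, and let A and C be the Riordan matrices of the pairs (a,b) and (c,d), i.e. A_{n,k} = [[x^n]] a(x)·b(x)^k and C_{k,i} = [[x^k]] c(x)·d(x)^i. Then for all n ≥ i ≥ 0, the product matrix has entries ∑_{k=i}^{n} A_{n,k} C_{k,i} = [[x^n]] a(x)·c(b(x))·(d(b(x)))^i, where c(b(x)) and d(b(x)) denote formal substitution of b (which is well defined since b(0)=0). In other words, the product of the Riordan matrices (a,b) and (c,d) is the Riordan matrix (a(x)·c(b(x)), d(b(x))). -/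
open Finset PowerSeries

/-- Formal substitution of a power series `h` (with zero constant term) into `p`:
the `n`-th coefficient of `p(h(x))` is `∑_{k=0}^{n} p_k · [[x^n]] h^k`. -/
noncomputable def PowerSeries.scomp (p h : PowerSeries ℂ) : PowerSeries ℂ :=
  PowerSeries.mk fun n => ∑ k ∈ Finset.range (n + 1),
    (PowerSeries.coeff k p) * (PowerSeries.coeff n (h ^ k))

lemma coeff_pow_eq_zero {b : PowerSeries ℂ} (hb : PowerSeries.constantCoeff b = 0)
    {k n : ℕ} (h : n < k) : PowerSeries.coeff n (b ^ k) = 0 := by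
  have hdvd : (PowerSeries.X : PowerSeries ℂ) ^ k ∣ b ^ k :=
    pow_dvd_pow_of_dvd (PowerSeries.X_dvd_iff.mpr hb) k
  exact (PowerSeries.X_pow_dvd_iff.mp hdvd) n h

lemma coeff_scomp (p b : PowerSeries ℂ) (n : ℕ) :
    PowerSeries.coeff n (PowerSeries.scomp p b) =
      ∑ k ∈ Finset.range (n + 1),
        (PowerSeries.coeff k p) * (PowerSeries.coeff n (b ^ k)) := by
  simp [PowerSeries.scomp]

/-- Inner sums in `scomp` coefficients can be extended. -/
lemma coeff_scomp_ext (p b : PowerSeries ℂ) (hb : PowerSeries.constantCoeff b = 0)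
    {m n : ℕ} (hmn : m ≤ n) :
    PowerSeries.coeff m (PowerSeries.scomp p b) =
      ∑ k ∈ Finset.range (n + 1),
        (PowerSeries.coeff k p) * (PowerSeries.coeff m (b ^ k)) := by
  rw [coeff_scomp]
  refine Finset.sum_subset ?_ ?_
  · exact Finset.range_subset_range.mpr (by omega)
  · intro k hk hk'
    simp only [Finset.mem_range] at hk hk'
    rw [coeff_pow_eq_zero hb (by omega), mul_zero]

lemma scomp_mul (p q b : PowerSeries ℂ) (hb : PowerSeries.constantCoeff b = 0) :
    PowerSeries.scomp (p * q) b = PowerSeries.scomp p b * PowerSeries.scomp q b := by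
  ext n
  rw [PowerSeries.coeff_mul, coeff_scomp]
  -- RHS: extend inner sums to `range (n+1)` and expand
  have hrhs : ∑ mj ∈ Finset.HasAntidiagonal.antidiagonal n,
      PowerSeries.coeff mj.1 (PowerSeries.scomp p b) *
        PowerSeries.coeff mj.2 (PowerSeries.scomp q b) =
      ∑ uv ∈ Finset.range (n + 1) ×ˢ Finset.range (n + 1),
        PowerSeries.coeff uv.1 p * PowerSeries.coeff uv.2 q *
          PowerSeries.coeff n (b ^ (uv.1 + uv.2)) := by
    have : ∀ mj ∈ Finset.HasAntidiagonal.antidiagonal n,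
        PowerSeries.coeff mj.1 (PowerSeries.scomp p b) *
          PowerSeries.coeff mj.2 (PowerSeries.scomp q b) =
        ∑ uv ∈ Finset.range (n + 1) ×ˢ Finset.range (n + 1),
          PowerSeries.coeff uv.1 p * PowerSeries.coeff uv.2 q *
            (PowerSeries.coeff mj.1 (b ^ uv.1) * PowerSeries.coeff mj.2 (b ^ uv.2)) := by
      intro mj hmj
      rw [Finset.HasAntidiagonal.mem_antidiagonal] at hmj
      rw [coeff_scomp_ext p b hb (show mj.1 ≤ n by omega),
        coeff_scomp_ext q b hb (show mj.2 ≤ n by omega), Finset.sum_mul_sum,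
        Finset.sum_product]
      refine Finset.sum_congr rfl fun u _ => Finset.sum_congr rfl fun v _ => by ring
    rw [Finset.sum_congr rfl this, Finset.sum_comm]
    refine Finset.sum_congr rfl fun uv _ => ?_
    rw [← Finset.mul_sum, ← PowerSeries.coeff_mul, ← pow_add]
  rw [hrhs]
  -- LHS: expand `coeff k (p*q)` and reindex
  have hlhs : ∀ k ∈ Finset.range (n + 1),
      PowerSeries.coeff k (p * q) * PowerSeries.coeff n (b ^ k) =
      ∑ uv ∈ Finset.range (n + 1) ×ˢ Finset.range (n + 1),
        (if uv.1 + uv.2 = k then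
          PowerSeries.coeff uv.1 p * PowerSeries.coeff uv.2 q *
            PowerSeries.coeff n (b ^ (uv.1 + uv.2)) else 0) := by
    intro k hk
    rw [Finset.mem_range] at hk
    rw [← Finset.sum_filter]
    have hset : (Finset.range (n + 1) ×ˢ Finset.range (n + 1)).filter
        (fun uv => uv.1 + uv.2 = k) = Finset.HasAntidiagonal.antidiagonal k := by
      ext uv
      simp only [Finset.mem_filter, Finset.mem_product, Finset.mem_range,
        Finset.HasAntidiagonal.mem_antidiagonal]
      omega
    rw [hset, PowerSeries.coeff_mul, Finset.sum_mul]
    refine Finset.sum_congr rfl fun uv huv => ?_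
    rw [Finset.HasAntidiagonal.mem_antidiagonal] at huv
    rw [huv]
  rw [Finset.sum_congr rfl hlhs, Finset.sum_comm]
  refine Finset.sum_congr rfl fun uv huv => ?_
  rw [Finset.sum_ite_eq (Finset.range (n + 1)) (uv.1 + uv.2)]
  rw [Finset.mem_product, Finset.mem_range, Finset.mem_range] at huv
  by_cases h : uv.1 + uv.2 ∈ Finset.range (n + 1)
  · simp [h]
  · rw [if_neg h]
    rw [Finset.mem_range] at h
    rw [coeff_pow_eq_zero hb (by omega), mul_zero]

lemma scomp_one (b : PowerSeries ℂ) : PowerSeries.scomp 1 b = 1 := by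
  ext n
  rw [coeff_scomp]
  rw [Finset.sum_eq_single 0]
  · simp
  · intro k hk hk0
    rw [PowerSeries.coeff_one, if_neg hk0, zero_mul]
  · intro h
    simp at h

lemma scomp_pow (d b : PowerSeries ℂ) (hb : PowerSeries.constantCoeff b = 0) (i : ℕ) :
    PowerSeries.scomp (d ^ i) b = (PowerSeries.scomp d b) ^ i := by
  induction i with
  | zero => simpa using scomp_one b
  | succ i ih => rw [pow_succ, scomp_mul _ _ _ hb, ih, pow_succ]

lemma coeff_mul_scomp (a e b : PowerSeries ℂ) (hb : PowerSeries.constantCoeff b = 0)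
    (n : ℕ) :
    PowerSeries.coeff n (a * PowerSeries.scomp e b) =
      ∑ k ∈ Finset.range (n + 1),
        PowerSeries.coeff k e * PowerSeries.coeff n (a * b ^ k) := by
  rw [PowerSeries.coeff_mul]
  have : ∀ mj ∈ Finset.HasAntidiagonal.antidiagonal n,
      PowerSeries.coeff mj.1 a * PowerSeries.coeff mj.2 (PowerSeries.scomp e b) =
      ∑ k ∈ Finset.range (n + 1),
        PowerSeries.coeff k e *
          (PowerSeries.coeff mj.1 a * PowerSeries.coeff mj.2 (b ^ k)) := by
    intro mj hmj
    rw [Finset.HasAntidiagonal.mem_antidiagonal] at hmj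
    rw [coeff_scomp_ext e b hb (show mj.2 ≤ n by omega), Finset.mul_sum]
    exact Finset.sum_congr rfl fun k _ => by ring
  rw [Finset.sum_congr rfl this, Finset.sum_comm]
  refine Finset.sum_congr rfl fun k _ => ?_
  rw [← Finset.mul_sum, ← PowerSeries.coeff_mul]

/-- The product of the Riordan matrices `(a,b)` and `(c,d)` is the Riordan matrix
`(a(x)·c(b(x)), d(b(x)))`. -/
theorem riordan_mul (a b c d : PowerSeries ℂ)
    (hb : PowerSeries.constantCoeff b = 0)
    (hd : PowerSeries.constantCoeff d = 0)
    (n i : ℕ) (hni : i ≤ n) :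
    ∑ k ∈ Finset.Icc i n,
        (PowerSeries.coeff n (a * b ^ k)) * (PowerSeries.coeff k (c * d ^ i)) =
      PowerSeries.coeff n (a * (PowerSeries.scomp c b) * (PowerSeries.scomp d b) ^ i) := by
  rw [← scomp_pow d b hb, mul_assoc, ← scomp_mul c (d ^ i) b hb,
    coeff_mul_scomp a (c * d ^ i) b hb]
  rw [show ∑ k ∈ Finset.range (n + 1),
        PowerSeries.coeff k (c * d ^ i) * PowerSeries.coeff n (a * b ^ k) =
      ∑ k ∈ Finset.range (n + 1),
        PowerSeries.coeff n (a * b ^ k) * PowerSeries.coeff k (c * d ^ i) from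
      Finset.sum_congr rfl fun k _ => mul_comm _ _]
  refine Finset.sum_subset ?_ ?_
  · intro k hk
    rw [Finset.mem_Icc] at hk
    rw [Finset.mem_range]
    omega
  · intro k hk hk'
    rw [Finset.mem_range] at hk
    rw [Finset.mem_Icc] at hk'
    have hki : k < i := by omega
    have : PowerSeries.coeff k (c * d ^ i) = 0 := by
      have hdvd : (PowerSeries.X : PowerSeries ℂ) ^ i ∣ c * d ^ i :=
        Dvd.dvd.mul_left (pow_dvd_pow_of_dvd (PowerSeries.X_dvd_iff.mpr hd) i) c
      exact (PowerSeries.X_pow_dvd_iff.mp hdvd) k hki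
    rw [this, mul_zero]
end

section
/- For every integer k ≥ 0, the following identity of polynomials (in ℚ[x]) holds: 2^k · B_k(x) = ∑_{n=0}^{k} C(k,n) · B_n(x) · E_{k−n}(x), where B_n(x) is the n-th Bernoulli polynomial and E_n(x) is the n-th Euler polynomial. Equivalently, 2^k B_k(x)/k! = ∑_{n=0}^{k} (B_n(x)/n!)·(E_{k−n}(x)/(k−n)!). -/
open Finset

/-- The `n`-th Euler polynomial, i.e. the unique sequence of polynomials in `ℚ[X]`
satisfying `E_n(x) + ∑_{k=0}^{n} C(n,k) E_k(x) = 2x^n`, so that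
`E_n = x^n - (1/2) ∑_{k<n} C(n,k) E_k`. -/
noncomputable def eulerPoly : ℕ → Polynomial ℚ
  | n => Polynomial.X ^ n - Polynomial.C (1/2 : ℚ) *
      ∑ k : Fin n, Polynomial.C (n.choose k : ℚ) * eulerPoly k

open Nat

lemma eulerPoly_sum (n : ℕ) :
    ∑ k ∈ range n, Polynomial.C (n.choose k : ℚ) * eulerPoly k
      = 2 * Polynomial.X ^ n - 2 * eulerPoly n := by
  have hdef : eulerPoly n = Polynomial.X ^ n - Polynomial.C (1/2 : ℚ) *
      ∑ k ∈ range n, Polynomial.C (n.choose k : ℚ) * eulerPoly k := by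
    rw [eulerPoly]
    congr 2
    exact Fin.sum_univ_eq_sum_range (fun k => Polynomial.C (n.choose k : ℚ) * eulerPoly k) n
  have hC : (2 : Polynomial ℚ) * Polynomial.C (1/2 : ℚ) = 1 := by
    rw [show (2 : Polynomial ℚ) = Polynomial.C 2 from (map_ofNat _ 2).symm, ← Polynomial.C_mul]
    norm_num
  have h3 : Polynomial.C (1/2 : ℚ) * ∑ k ∈ range n, Polynomial.C (n.choose k : ℚ) * eulerPoly k
      = Polynomial.X ^ n - eulerPoly n := by linear_combination hdef
  calc ∑ k ∈ range n, Polynomial.C (n.choose k : ℚ) * eulerPoly k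
      = (2 * Polynomial.C (1/2 : ℚ)) * ∑ k ∈ range n, Polynomial.C (n.choose k : ℚ) * eulerPoly k := by
        rw [hC, one_mul]
    _ = 2 * (Polynomial.C (1/2 : ℚ) * ∑ k ∈ range n, Polynomial.C (n.choose k : ℚ) * eulerPoly k) := by ring
    _ = 2 * Polynomial.X ^ n - 2 * eulerPoly n := by rw [h3]; ring

lemma euler_gen :
    (PowerSeries.mk fun n => (1 / n ! : ℚ) • eulerPoly n) * (PowerSeries.exp (Polynomial ℚ) + 1)
      = 2 * PowerSeries.rescale Polynomial.X (PowerSeries.exp (Polynomial ℚ)) := by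
  ext n : 1
  rw [PowerSeries.coeff_mul, Nat.sum_antidiagonal_eq_sum_range_succ_mk, sum_range_succ]
  simp only [map_add, PowerSeries.coeff_exp, PowerSeries.coeff_one, PowerSeries.coeff_mk,
    PowerSeries.coeff_rescale, Nat.sub_self, Nat.factorial_zero, Nat.cast_one, if_pos rfl]
  have hstep : ∀ i ∈ range n,
      ((1 / i ! : ℚ) • eulerPoly i) *
        ((algebraMap ℚ (Polynomial ℚ)) (1 / (n - i)! : ℚ) + if n - i = 0 then 1 else 0)
      = Polynomial.C (1 / n ! : ℚ) * (Polynomial.C (n.choose i : ℚ) * eulerPoly i) := by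
    intro i hi
    rw [mem_range] at hi
    rw [if_neg (Nat.sub_ne_zero_of_lt hi), add_zero]
    rw [Polynomial.algebraMap_eq, Polynomial.smul_eq_C_mul]
    rw [show Polynomial.C (1 / n ! : ℚ) * (Polynomial.C (n.choose i : ℚ) * eulerPoly i)
        = Polynomial.C (1 / n ! * n.choose i : ℚ) * eulerPoly i by rw [Polynomial.C_mul]; ring]
    rw [show Polynomial.C (1 / i ! : ℚ) * eulerPoly i * Polynomial.C (1 / (n - i)! : ℚ)
        = Polynomial.C (1 / i ! * (1 / (n - i)!) : ℚ) * eulerPoly i by rw [Polynomial.C_mul]; ring]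
    congr 1
    rw [Nat.cast_choose ℚ hi.le]
    field_simp
  rw [sum_congr rfl hstep, ← mul_sum, eulerPoly_sum]
  simp only [Polynomial.algebraMap_eq, Polynomial.smul_eq_C_mul, if_true]
  rw [show ((2:PowerSeries (Polynomial ℚ))) = PowerSeries.C (2 : Polynomial ℚ) from (map_ofNat _ 2).symm,
    mul_comm (PowerSeries.C (2 : Polynomial ℚ)), PowerSeries.coeff_mul_C, PowerSeries.coeff_rescale,
    PowerSeries.coeff_exp, Polynomial.algebraMap_eq]
  norm_num
  ring

open PowerSeries in
lemma key_series :
    (PowerSeries.mk fun n => (1 / n ! : ℚ) • Polynomial.bernoulli n) *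
      (PowerSeries.mk fun n => (1 / n ! : ℚ) • eulerPoly n)
    = PowerSeries.rescale (2 : Polynomial ℚ)
        (PowerSeries.mk fun n => (1 / n ! : ℚ) • Polynomial.bernoulli n) := by
  set A := Polynomial ℚ
  set Bs : PowerSeries A := PowerSeries.mk fun n => (1 / n ! : ℚ) • Polynomial.bernoulli n with hBs
  set Es : PowerSeries A := PowerSeries.mk fun n => (1 / n ! : ℚ) • eulerPoly n with hEs
  have hB : Bs * (exp A - 1) = PowerSeries.X * rescale Polynomial.X (exp A) := by
    rw [hBs]
    have h := Polynomial.bernoulli_generating_function (Polynomial.X : Polynomial ℚ)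
    rw [← h]
    congr 1
    ext n
    simp [Polynomial.aeval_X_left_apply]
  have h1 : (exp A - 1) ≠ 0 := by
    intro h
    have := congrArg (coeff (R := A) 1) h
    simp [coeff_exp (A := A), PowerSeries.coeff_one] at this
  have h2 : (exp A + 1) ≠ 0 := by
    intro h
    have := congrArg (constantCoeff (R := A)) h
    simp [constantCoeff_exp (A := A)] at this
  have hsq : (exp A - 1) * (exp A + 1) = rescale (2 : A) (exp A) - 1 := by
    have h := exp_mul_exp_eq_exp_add (1 : A) (1 : A)
    rw [rescale_one] at h
    simp only [RingHom.id_apply] at h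
    rw [show ((1:A)+1) = 2 from one_add_one_eq_two] at h
    rw [← h]; ring
  have hB2 : rescale (2 : A) Bs * (rescale (2 : A) (exp A) - 1)
      = 2 * PowerSeries.X * rescale (2 * Polynomial.X) (exp A) := by
    have h := congrArg (rescale (2 : A)) hB
    rw [map_mul, map_sub, map_one, map_mul] at h
    rw [h, rescale_X, rescale_rescale, mul_comm Polynomial.X (2:A),
      show (PowerSeries.C (R := A)) (2:A) = (2 : PowerSeries A) from map_ofNat _ 2]
  apply mul_right_cancel₀ (mul_ne_zero h1 h2)
  calc Bs * Es * ((exp A - 1) * (exp A + 1))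
      = (Bs * (exp A - 1)) * (Es * (exp A + 1)) := by ring
    _ = (PowerSeries.X * rescale Polynomial.X (exp A)) * (2 * rescale Polynomial.X (exp A)) := by
        rw [hB, euler_gen]
    _ = 2 * PowerSeries.X * (rescale Polynomial.X (exp A) * rescale Polynomial.X (exp A)) := by ring
    _ = 2 * PowerSeries.X * rescale (2 * Polynomial.X) (exp A) := by
        rw [exp_mul_exp_eq_exp_add, ← two_mul]
    _ = rescale (2 : A) Bs * ((exp A - 1) * (exp A + 1)) := by rw [hsq, hB2]

/-- `2^k B_k(x) = ∑_{n=0}^{k} C(k,n) B_n(x) E_{k-n}(x)` in `ℚ[X]`. -/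
theorem two_pow_bernoulli_eq_sum (k : ℕ) :
    Polynomial.C ((2 : ℚ) ^ k) * Polynomial.bernoulli k =
      ∑ n ∈ Finset.range (k + 1),
        Polynomial.C (k.choose n : ℚ) * Polynomial.bernoulli n * eulerPoly (k - n) := by
  have hc := congrArg (PowerSeries.coeff (R := Polynomial ℚ) k) key_series
  rw [PowerSeries.coeff_mul, Nat.sum_antidiagonal_eq_sum_range_succ_mk,
    PowerSeries.coeff_rescale] at hc
  simp only [PowerSeries.coeff_mk] at hc
  have hk : (k ! : ℚ) ≠ 0 := Nat.cast_ne_zero.2 (factorial_ne_zero k)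
  symm
  calc ∑ n ∈ Finset.range (k + 1),
        Polynomial.C (k.choose n : ℚ) * Polynomial.bernoulli n * eulerPoly (k - n)
      = Polynomial.C (k ! : ℚ) * ∑ n ∈ Finset.range (k + 1),
          ((1 / n ! : ℚ) • Polynomial.bernoulli n) * ((1 / (k - n)! : ℚ) • eulerPoly (k - n)) := by
        rw [mul_sum]
        refine sum_congr rfl fun n hn => ?_
        rw [mem_range, Nat.lt_succ_iff] at hn
        rw [Polynomial.smul_eq_C_mul, Polynomial.smul_eq_C_mul,
          show ((k.choose n : ℚ)) = (k ! : ℚ) * (1 / n !) * (1 / (k - n)!) by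
            rw [Nat.cast_choose ℚ hn]; field_simp,
          Polynomial.C_mul, Polynomial.C_mul]
        ring
    _ = Polynomial.C (k ! : ℚ) * ((2 : Polynomial ℚ) ^ k * ((1 / k ! : ℚ) • Polynomial.bernoulli k)) := by
        rw [hc]
    _ = Polynomial.C ((2 : ℚ) ^ k) * Polynomial.bernoulli k := by
        rw [Polynomial.smul_eq_C_mul,
          show (2 : Polynomial ℚ) = Polynomial.C (2 : ℚ) from (map_ofNat _ 2).symm, ← map_pow,
          show (Polynomial.C (k ! : ℚ)) * (Polynomial.C ((2:ℚ)^k) * (Polynomial.C (1 / k ! : ℚ) * Polynomial.bernoulli k))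
            = Polynomial.C ((k ! : ℚ) * (2:ℚ)^k * (1 / k !)) * Polynomial.bernoulli k by
              rw [Polynomial.C_mul, Polynomial.C_mul]; ring]
        congr 2
        field_simp
end

section
/- Let q, y, x ∈ ℂ with |q| < 1 and |y| < 1. Then the series ∑_{j=0}^{∞} (y^j / (q;q)_j) · (x;q)_j converges and its sum equals (yx;q)_∞ / (y;q)_∞, i.e. the ratio of the convergent infinite products ∏_{i=0}^{∞}(1 − yx·q^i) and ∏_{i=0}^{∞}(1 − y·q^i) (the denominator being nonzero since |y·q^i| < 1 for all i). -/
open Finset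

/-- The finite q-Pochhammer symbol `(a;q)_n = ∏_{i=0}^{n-1} (1 - a q^i)`. -/
noncomputable def qPoch (a q : ℂ) (n : ℕ) : ℂ := ∏ i ∈ Finset.range n, (1 - a * q ^ i)

noncomputable def qbC (q x : ℂ) : ℝ :=
  Real.exp (∑' i : ℕ, ‖x‖ * ‖q‖ ^ i) /
    Real.exp (∑' i : ℕ, Real.log (1 - ‖q‖ ^ (i + 1)))


-- summability of logs
lemma qb_summable_log (w q : ℂ) (hq : ‖q‖ < 1) :
    Summable (fun i : ℕ => Complex.log (1 - w * q ^ i)) := by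
  apply (summable_geometric_of_lt_one (by positivity) hq).mul_left ((3/2) * ‖w‖)
    |>.of_norm_bounded_eventually_nat ?_
  have h0 : Filter.Tendsto (fun i : ℕ => ‖w‖ * ‖q‖ ^ i) Filter.atTop (nhds 0) := by
    simpa using (tendsto_pow_atTop_nhds_zero_of_lt_one (by positivity) hq).const_mul (‖w‖)
  filter_upwards [h0.eventually_le_const (by norm_num : (0:ℝ) < 1/2)] with i hi
  have : (1 : ℂ) - w * q ^ i = 1 + (-(w * q ^ i)) := by ring
  rw [this]
  calc ‖Complex.log (1 + -(w * q ^ i))‖ ≤ 3/2 * ‖-(w * q ^ i)‖ := by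
        apply Complex.norm_log_one_add_half_le_self
        simpa [norm_mul, norm_pow] using hi
    _ ≤ 3/2 * ‖w‖ * ‖q‖ ^ i := by
        simp [norm_mul, norm_pow, mul_assoc]

lemma qb_multipliable (w q : ℂ) (hq : ‖q‖ < 1)
    (hne : ∀ i : ℕ, (1 : ℂ) - w * q ^ i ≠ 0) :
    Multipliable (fun i : ℕ => 1 - w * q ^ i) :=
  Complex.multipliable_of_summable_log (qb_summable_log w q hq)

lemma qb_tprod_ne_zero (w q : ℂ) (hq : ‖q‖ < 1)
    (hne : ∀ i : ℕ, (1 : ℂ) - w * q ^ i ≠ 0) :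
    (∏' i : ℕ, (1 - w * q ^ i)) ≠ 0 := by
  have h2 := Complex.cexp_tsum_eq_tprod (f := fun i => 1 - w * q ^ i) hne (qb_summable_log w q hq)
  rw [← h2]
  exact Complex.exp_ne_zero _

-- if some factor is zero, still multipliable (product is 0)
lemma qb_hasProd_zero {f : ℕ → ℂ} {i0 : ℕ} (h : f i0 = 0) : HasProd f 0 := by
  have : ∀ᶠ s : Finset ℕ in Filter.atTop, ∏ i ∈ s, f i = 0 := by
    filter_upwards [Filter.eventually_ge_atTop {i0}] with s hs
    exact Finset.prod_eq_zero (hs (Finset.mem_singleton_self i0)) h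
  exact Filter.Tendsto.congr' (Filter.EventuallyEq.symm this) tendsto_const_nhds

lemma qb_upper (x q : ℂ) (hq : ‖q‖ < 1) (j : ℕ) :
    ‖qPoch x q j‖ ≤ Real.exp (∑' i : ℕ, ‖x‖ * ‖q‖ ^ i) := by
  have hsum : Summable (fun i : ℕ => ‖x‖ * ‖q‖ ^ i) :=
    (summable_geometric_of_lt_one (by positivity) hq).mul_left _
  calc ‖qPoch x q j‖ = ∏ i ∈ range j, ‖1 - x * q ^ i‖ := by
        simp [qPoch, norm_prod]
    _ ≤ ∏ i ∈ range j, Real.exp (‖x‖ * ‖q‖ ^ i) := by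
        apply Finset.prod_le_prod (fun i _ => by positivity)
        intro i _
        calc ‖1 - x * q ^ i‖ ≤ ‖(1:ℂ)‖ + ‖x * q ^ i‖ := by
              simpa [sub_eq_add_neg] using norm_add_le 1 (-(x * q ^ i))
          _ = ‖x‖ * ‖q‖ ^ i + 1 := by simp [norm_mul, norm_pow]; ring
          _ ≤ Real.exp (‖x‖ * ‖q‖ ^ i) := Real.add_one_le_exp _
    _ = Real.exp (∑ i ∈ range j, ‖x‖ * ‖q‖ ^ i) := by
        rw [Real.exp_sum]
    _ ≤ Real.exp (∑' i : ℕ, ‖x‖ * ‖q‖ ^ i) := by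
        apply Real.exp_le_exp.2
        exact Summable.sum_le_tsum _ (fun i _ => by positivity) hsum

lemma qb_log_summable (q : ℂ) (hq : ‖q‖ < 1) :
    Summable (fun i : ℕ => -Real.log (1 - ‖q‖ ^ (i + 1))) := by
  have hq0 : (0:ℝ) ≤ ‖q‖ := by positivity
  have hg : Summable (fun i : ℕ => (1 - ‖q‖)⁻¹ * ‖q‖ ^ (i+1)) := by
    apply Summable.mul_left
    exact (summable_geometric_of_lt_one hq0 hq).comp_injective (add_left_injective 1)
  apply Summable.of_nonneg_of_le ?_ ?_ hg
  · intro i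
    rw [neg_nonneg]
    apply Real.log_nonpos
    · nlinarith [pow_nonneg hq0 (i+1), pow_le_one₀ hq0 hq.le (n := i+1)]
    · nlinarith [pow_nonneg hq0 (i+1)]
  · intro i
    have h1 : ‖q‖ ^ (i+1) ≤ ‖q‖ := pow_le_of_le_one hq0 hq.le (by omega)
    have h2 : (0:ℝ) < 1 - ‖q‖ ^ (i+1) := by nlinarith [pow_nonneg hq0 (i+1)]
    have h3 : -Real.log (1 - ‖q‖ ^ (i+1)) = Real.log (1 - ‖q‖ ^ (i+1))⁻¹ := by
      rw [Real.log_inv]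
    rw [h3]
    calc Real.log (1 - ‖q‖ ^ (i+1))⁻¹ ≤ (1 - ‖q‖ ^ (i+1))⁻¹ - 1 :=
          Real.log_le_sub_one_of_pos (by positivity)
      _ = ‖q‖ ^ (i+1) / (1 - ‖q‖ ^ (i+1)) := by field_simp; ring
      _ ≤ (1 - ‖q‖)⁻¹ * ‖q‖ ^ (i+1) := by
          have hc : (0:ℝ) < 1 - ‖q‖ := by linarith
          rw [div_le_iff₀ h2, inv_mul_eq_div, div_mul_eq_mul_div, le_div_iff₀ hc]
          nlinarith [pow_nonneg hq0 (i+1)]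

lemma qb_lower (q : ℂ) (hq : ‖q‖ < 1) (j : ℕ) :
    Real.exp (∑' i : ℕ, Real.log (1 - ‖q‖ ^ (i + 1))) ≤ ‖qPoch q q j‖ := by
  have hq0 : (0:ℝ) ≤ ‖q‖ := by positivity
  have hlt : ∀ i : ℕ, ‖q‖ ^ (i+1) < 1 := fun i =>
    lt_of_le_of_lt (pow_le_of_le_one hq0 hq.le (by omega)) hq
  have hs := qb_log_summable q hq
  calc Real.exp (∑' i : ℕ, Real.log (1 - ‖q‖ ^ (i + 1)))
      ≤ Real.exp (∑ i ∈ range j, Real.log (1 - ‖q‖ ^ (i + 1))) := by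
        apply Real.exp_le_exp.2
        have h := Summable.sum_le_tsum (range j) (fun i _ => by
            rw [neg_nonneg]
            exact Real.log_nonpos (by nlinarith [pow_nonneg hq0 (i+1), (hlt i)])
              (by nlinarith [pow_nonneg hq0 (i+1)])) hs
        rw [Finset.sum_neg_distrib, tsum_neg] at h
        linarith
    _ = ∏ i ∈ range j, (1 - ‖q‖ ^ (i + 1)) := by
        rw [Real.exp_sum]
        exact Finset.prod_congr rfl (fun i _ => Real.exp_log (by nlinarith [hlt i, pow_nonneg hq0 (i+1)]))
    _ ≤ ∏ i ∈ range j, ‖1 - q * q ^ i‖ := by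
        apply Finset.prod_le_prod
        · intro i _; nlinarith [hlt i, pow_nonneg hq0 (i+1)]
        · intro i _
          have : ‖q * q ^ i‖ = ‖q‖ ^ (i+1) := by
            simp [norm_mul, norm_pow, pow_succ]; ring
          calc 1 - ‖q‖ ^ (i+1) = 1 - ‖q * q ^ i‖ := by rw [this]
            _ ≤ ‖1 - q * q ^ i‖ := by
                simpa using norm_sub_norm_le (1 : ℂ) (q * q^i)
    _ = ‖qPoch q q j‖ := by simp [qPoch, norm_prod]

lemma qbC_pos (q x : ℂ) : 0 < qbC q x := by
  unfold qbC; positivity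

lemma qb_poch_ne (q : ℂ) (hq : ‖q‖ < 1) (j : ℕ) : qPoch q q j ≠ 0 := by
  intro h
  have := qb_lower q hq j
  rw [h] at this
  simp at this
  exact absurd this (not_le.2 (Real.exp_pos _))

lemma qb_term_bound (q x z : ℂ) (hq : ‖q‖ < 1) (j : ℕ) :
    ‖z ^ j / qPoch q q j * qPoch x q j‖ ≤ qbC q x * ‖z‖ ^ j := by
  have h1 := qb_upper x q hq j
  have h2 := qb_lower q hq j
  have h3 : (0:ℝ) < ‖qPoch q q j‖ := lt_of_lt_of_le (Real.exp_pos _) h2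
  rw [norm_mul, norm_div, norm_pow, qbC]
  rw [div_mul_eq_mul_div, div_mul_eq_mul_div, div_le_div_iff₀ h3 (Real.exp_pos _)] -- early
  have key : ‖z‖ ^ j * ‖qPoch x q j‖ *
      Real.exp (∑' i : ℕ, Real.log (1 - ‖q‖ ^ (i + 1))) ≤
      Real.exp (∑' i : ℕ, ‖x‖ * ‖q‖ ^ i) * ‖z‖ ^ j *
      ‖qPoch q q j‖ := by
    calc ‖z‖ ^ j * ‖qPoch x q j‖ * Real.exp (∑' i : ℕ, Real.log (1 - ‖q‖ ^ (i + 1)))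
        ≤ ‖z‖ ^ j * Real.exp (∑' i : ℕ, ‖x‖ * ‖q‖ ^ i) * ‖qPoch q q j‖ := by
          apply mul_le_mul
          · exact mul_le_mul_of_nonneg_left h1 (by positivity)
          · exact h2
          · positivity
          · positivity
      _ = Real.exp (∑' i : ℕ, ‖x‖ * ‖q‖ ^ i) * ‖z‖ ^ j * ‖qPoch q q j‖ := by ring
  exact key

lemma qb_summable (q x z : ℂ) (hq : ‖q‖ < 1) (hz : ‖z‖ < 1) :
    Summable (fun j : ℕ => z ^ j / qPoch q q j * qPoch x q j) := by
  apply Summable.of_norm_bounded ((summable_geometric_of_lt_one (by positivity) hz).mul_left (qbC q x))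
  intro j
  simpa  using qb_term_bound q x z hq j

lemma qb_one_sub_pow_ne (q : ℂ) (hq : ‖q‖ < 1) (n : ℕ) :
    (1 : ℂ) - q * q ^ n ≠ 0 := by
  intro h
  have h1 : q * q ^ n = 1 := by linear_combination -h
  have : ‖q * q ^ n‖ < 1 := by
    rw [norm_mul, norm_pow]
    calc ‖q‖ * ‖q‖ ^ n ≤ ‖q‖ * 1 := by
          exact mul_le_mul_of_nonneg_left (pow_le_one₀ (by positivity) hq.le) (by positivity)
      _ < 1 := by simpa using hq
  rw [h1] at this
  simp at this

lemma qb_feq (q x z : ℂ) (hq : ‖q‖ < 1) (hz : ‖z‖ < 1) :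
    (1 - z) * (∑' j : ℕ, z ^ j / qPoch q q j * qPoch x q j) =
    (1 - x * z) * (∑' j : ℕ, (q * z) ^ j / qPoch q q j * qPoch x q j) := by
  have hqz : ‖q * z‖ < 1 := by
    rw [norm_mul]
    calc ‖q‖ * ‖z‖ ≤ 1 * ‖z‖ := by
          exact mul_le_mul_of_nonneg_right hq.le (by positivity)
      _ < 1 := by simpa using hz
  set S := ∑' j : ℕ, z ^ j / qPoch q q j * qPoch x q j with hSdef
  set T := ∑' j : ℕ, (q * z) ^ j / qPoch q q j * qPoch x q j with hTdef
  have hS : HasSum (fun j : ℕ => z ^ j / qPoch q q j * qPoch x q j) S :=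
    (qb_summable q x z hq hz).hasSum
  have hT : HasSum (fun j : ℕ => (q * z) ^ j / qPoch q q j * qPoch x q j) T :=
    (qb_summable q x (q * z) hq hqz).hasSum
  set g : ℕ → ℂ := fun j => z ^ j / qPoch q q j * qPoch x q j
    - (q * z) ^ j / qPoch q q j * qPoch x q j with hgdef
  have hg : HasSum g (S - T) := hS.sub hT
  have hshift : HasSum (fun n : ℕ => g (n + 1)) (S - T - ∑ i ∈ range 1, g i) :=
    (hasSum_nat_add_iff' 1).2 hg
  have hg0 : ∑ i ∈ range 1, g i = 0 := by simp [hgdef]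
  rw [hg0, sub_zero] at hshift
  have hkey : ∀ n : ℕ, g (n + 1) =
      z * (z ^ n / qPoch q q n * qPoch x q n) - x * z * ((q * z) ^ n / qPoch q q n * qPoch x q n) := by
    intro n
    have eQ : qPoch q q (n + 1) = qPoch q q n * (1 - q * q ^ n) := Finset.prod_range_succ _ _
    have eX : qPoch x q (n + 1) = qPoch x q n * (1 - x * q ^ n) := Finset.prod_range_succ _ _
    rw [hgdef]
    simp only [eQ, eX]
    have h1 := qb_poch_ne q hq n
    have h2 := qb_one_sub_pow_ne q hq n
    field_simp
    ring
  have hshift2 : HasSum (fun n : ℕ => z * (z ^ n / qPoch q q n * qPoch x q n)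
      - x * z * ((q * z) ^ n / qPoch q q n * qPoch x q n)) (S - T) :=
    hshift.congr_fun (fun n => (hkey n).symm)
  have h2 : HasSum (fun n : ℕ => z * (z ^ n / qPoch q q n * qPoch x q n)
      - x * z * ((q * z) ^ n / qPoch q q n * qPoch x q n)) (z * S - x * z * T) :=
    (hS.mul_left z).sub (hT.mul_left (x * z))
  have := hshift2.unique h2
  linear_combination this

lemma qb_abs_pow_mul_lt (q y : ℂ) (hq : ‖q‖ < 1) (hy : ‖y‖ < 1) (n : ℕ) :
    ‖q ^ n * y‖ < 1 := by
  rw [norm_mul, norm_pow]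
  calc ‖q‖ ^ n * ‖y‖ ≤ 1 * ‖y‖ :=
        mul_le_mul_of_nonneg_right (pow_le_one₀ (by positivity) hq.le) (by positivity)
    _ < 1 := by simpa using hy

lemma qb_iter (q x y : ℂ) (hq : ‖q‖ < 1) (hy : ‖y‖ < 1) (n : ℕ) :
    (∑' j : ℕ, y ^ j / qPoch q q j * qPoch x q j) * ∏ i ∈ range n, (1 - y * q ^ i) =
    (∑' j : ℕ, (q ^ n * y) ^ j / qPoch q q j * qPoch x q j) * ∏ i ∈ range n, (1 - y * x * q ^ i) := by
  induction n with
  | zero => simp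
  | succ n ih =>
    have hzn : ‖q ^ n * y‖ < 1 := qb_abs_pow_mul_lt q y hq hy n
    have hfeq := qb_feq q x (q ^ n * y) hq hzn
    have harg : q ^ (n + 1) * y = q * (q ^ n * y) := by ring
    have harg2 : (1:ℂ) - q ^ n * y = 1 - y * q ^ n := by ring
    have harg3 : (1:ℂ) - x * (q ^ n * y) = 1 - y * x * q ^ n := by ring
    rw [harg, prod_range_succ, prod_range_succ]
    rw [harg2, harg3] at hfeq
    linear_combination (1 - y * q ^ n) * ih + (∏ i ∈ range n, (1 - y * x * q ^ i)) * hfeq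

lemma qb_dist (q x z : ℂ) (hq : ‖q‖ < 1) (hz : ‖z‖ < 1) :
    ‖(∑' j : ℕ, z ^ j / qPoch q q j * qPoch x q j) - 1‖ ≤
      qbC q x * ‖z‖ * (1 - ‖z‖)⁻¹ := by
  have hS := (qb_summable q x z hq hz).hasSum
  have hshift : HasSum (fun n : ℕ => z ^ (n+1) / qPoch q q (n+1) * qPoch x q (n+1))
      ((∑' j : ℕ, z ^ j / qPoch q q j * qPoch x q j) -
        ∑ i ∈ range 1, z ^ i / qPoch q q i * qPoch x q i) :=
    (hasSum_nat_add_iff' 1).2 hS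
  have h0 : ∑ i ∈ range 1, z ^ i / qPoch q q i * qPoch x q i = 1 := by simp [qPoch]
  rw [h0] at hshift
  have hsum_norm : Summable (fun n : ℕ => qbC q x * ‖z‖ * ‖z‖ ^ n) :=
    (summable_geometric_of_lt_one (by positivity) hz).mul_left _
  have hbound : ∀ n : ℕ, ‖z ^ (n+1) / qPoch q q (n+1) * qPoch x q (n+1)‖ ≤
      qbC q x * ‖z‖ * ‖z‖ ^ n := by
    intro n
    calc ‖z ^ (n+1) / qPoch q q (n+1) * qPoch x q (n+1)‖
        ≤ qbC q x * ‖z‖ ^ (n+1) := by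
          simpa  using qb_term_bound q x z hq (n+1)
      _ = qbC q x * ‖z‖ * ‖z‖ ^ n := by ring
  have hgeo : HasSum (fun n : ℕ => qbC q x * ‖z‖ * ‖z‖ ^ n)
      (qbC q x * ‖z‖ * (1 - ‖z‖)⁻¹) := by
    have := (hasSum_geometric_of_lt_one (by positivity : (0:ℝ) ≤ ‖z‖) hz).mul_left
      (qbC q x * ‖z‖)
    simpa [mul_assoc] using this
  have := hshift.norm_le_of_bounded hgeo hbound
  simpa  using this

lemma qb_tendsto_one (q x y : ℂ) (hq : ‖q‖ < 1) (hy : ‖y‖ < 1) :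
    Filter.Tendsto (fun n : ℕ => ∑' j : ℕ, (q ^ n * y) ^ j / qPoch q q j * qPoch x q j)
      Filter.atTop (nhds 1) := by
  have key : ∀ n : ℕ, ‖(∑' j : ℕ, (q ^ n * y) ^ j / qPoch q q j * qPoch x q j) - 1‖ ≤
      qbC q x * ‖y‖ * (1 - ‖y‖)⁻¹ * ‖q‖ ^ n := by
    intro n
    have hzn := qb_abs_pow_mul_lt q y hq hy n
    have h1 := qb_dist q x (q ^ n * y) hq hzn
    have habs : ‖q ^ n * y‖ = ‖q‖ ^ n * ‖y‖ := by
      rw [norm_mul, norm_pow]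
    have hle : ‖q ^ n * y‖ ≤ ‖y‖ := by
      rw [habs]
      calc ‖q‖ ^ n * ‖y‖ ≤ 1 * ‖y‖ :=
            mul_le_mul_of_nonneg_right (pow_le_one₀ (by positivity) hq.le) (by positivity)
        _ = ‖y‖ := one_mul _
    calc ‖(∑' j : ℕ, (q ^ n * y) ^ j / qPoch q q j * qPoch x q j) - 1‖
        ≤ qbC q x * ‖q ^ n * y‖ * (1 - ‖q ^ n * y‖)⁻¹ := by
          simpa  using h1
      _ ≤ qbC q x * ‖q ^ n * y‖ * (1 - ‖y‖)⁻¹ := by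
          apply mul_le_mul_of_nonneg_left (inv_anti₀ (by linarith) (by linarith))
          have := qbC_pos q x
          positivity
      _ = qbC q x * (‖q‖ ^ n * ‖y‖) * (1 - ‖y‖)⁻¹ := by rw [habs]
      _ = qbC q x * ‖y‖ * (1 - ‖y‖)⁻¹ * ‖q‖ ^ n := by ring
  have h0 : Filter.Tendsto (fun n : ℕ => qbC q x * ‖y‖ * (1 - ‖y‖)⁻¹ * ‖q‖ ^ n)
      Filter.atTop (nhds 0) := by
    simpa using (tendsto_pow_atTop_nhds_zero_of_lt_one (by positivity) hq).const_mul
      (qbC q x * ‖y‖ * (1 - ‖y‖)⁻¹)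
  have hsq := squeeze_zero_norm key h0
  have := hsq.add (tendsto_const_nhds (x := (1:ℂ)))
  simpa using this

lemma qb_factor_ne (w q : ℂ) (hq : ‖q‖ < 1) (hw : ‖w‖ < 1) (i : ℕ) :
    (1 : ℂ) - w * q ^ i ≠ 0 := by
  intro h
  have h1 : w * q ^ i = 1 := by linear_combination -h
  have : ‖w * q ^ i‖ < 1 := by
    rw [norm_mul, norm_pow]
    calc ‖w‖ * ‖q‖ ^ i ≤ ‖w‖ * 1 :=
          mul_le_mul_of_nonneg_left (pow_le_one₀ (by positivity) hq.le) (by positivity)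
      _ < 1 := by simpa using hw
  rw [h1] at this
  simp at this

/-- For `|q| < 1`, `|y| < 1`, the series `∑_j (y^j/(q;q)_j)(x;q)_j` converges to
`(yx;q)_∞/(y;q)_∞`, the ratio of the two convergent infinite products (the denominator
being nonzero). -/
theorem q_binomial_sum (q y x : ℂ) (hq : ‖q‖ < 1) (hy : ‖y‖ < 1) :
    Multipliable (fun i : ℕ => 1 - y * x * q ^ i) ∧
    Multipliable (fun i : ℕ => 1 - y * q ^ i) ∧
    (∏' i : ℕ, (1 - y * q ^ i)) ≠ 0 ∧
    HasSum (fun j : ℕ => y ^ j / qPoch q q j * qPoch x q j)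
      ((∏' i : ℕ, (1 - y * x * q ^ i)) / ∏' i : ℕ, (1 - y * q ^ i)) := by
  have hne_y : ∀ i : ℕ, (1 : ℂ) - y * q ^ i ≠ 0 := qb_factor_ne y q hq hy
  have hmul_y := qb_multipliable y q hq hne_y
  have hP := qb_tprod_ne_zero y q hq hne_y
  have hmul_yx : Multipliable (fun i : ℕ => 1 - y * x * q ^ i) := by
    by_cases hcase : ∀ i : ℕ, (1 : ℂ) - y * x * q ^ i ≠ 0
    · exact qb_multipliable (y * x) q hq hcase
    · push_neg at hcase
      obtain ⟨i0, h0⟩ := hcase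
      exact ⟨0, qb_hasProd_zero (by simpa using h0)⟩
  refine ⟨hmul_yx, hmul_y, hP, ?_⟩
  have hf := (qb_summable q x y hq hy).hasSum
  suffices h : (∑' j : ℕ, y ^ j / qPoch q q j * qPoch x q j) =
      (∏' i : ℕ, (1 - y * x * q ^ i)) / ∏' i : ℕ, (1 - y * q ^ i) by
    rw [← h]; exact hf
  rw [eq_div_iff hP]
  have h1 : Filter.Tendsto
      (fun n : ℕ => (∑' j : ℕ, y ^ j / qPoch q q j * qPoch x q j) * ∏ i ∈ range n, (1 - y * q ^ i))
      Filter.atTop (nhds ((∑' j : ℕ, y ^ j / qPoch q q j * qPoch x q j) * ∏' i : ℕ, (1 - y * q ^ i))) :=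
    (hmul_y.hasProd.tendsto_prod_nat).const_mul _
  have h2 : Filter.Tendsto
      (fun n : ℕ => (∑' j : ℕ, y ^ j / qPoch q q j * qPoch x q j) * ∏ i ∈ range n, (1 - y * q ^ i))
      Filter.atTop (nhds (1 * ∏' i : ℕ, (1 - y * x * q ^ i))) := by
    apply Filter.Tendsto.congr (fun n => (qb_iter q x y hq hy n).symm)
    exact (qb_tendsto_one q x y hq hy).mul (hmul_yx.hasProd.tendsto_prod_nat)
  have := tendsto_nhds_unique h1 h2
  rw [one_mul] at this
  exact this
end

section
/- Let q, x ∈ ℂ with |q| < 1 and x ≠ 0. Then for every integer n ≥ 1, ∑_{j=0}^{n} [n,j]_q · (x;q)_{n−j} · x^j · (1/x;q)_j = 0, where [n,j]_q is the Gaussian binomial coefficient and (a;q)_m the q-Pochhammer symbol. -/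
open Finset

/-- The Gaussian binomial coefficient `[n,j]_q = (q;q)_n/((q;q)_{n-j}(q;q)_j)`. -/
noncomputable def gaussBinom (q : ℂ) (n j : ℕ) : ℂ :=
  qPoch q q n / (qPoch q q (n - j) * qPoch q q j)

lemma qPoch_zero (a q : ℂ) : qPoch a q 0 = 1 := by simp [qPoch]

lemma qPoch_succ (a q : ℂ) (n : ℕ) :
    qPoch a q (n + 1) = qPoch a q n * (1 - a * q ^ n) := by
  simp [qPoch, Finset.prod_range_succ]

lemma qPoch_q_ne (q : ℂ) (hq : ‖q‖ < 1) (n : ℕ) : qPoch q q n ≠ 0 := by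
  refine Finset.prod_ne_zero_iff.mpr fun i _ => ?_
  intro h
  have h1 : q * q ^ i = 1 := by linear_combination -h
  have h2 : ‖q * q ^ i‖ < 1 := by
    have : ‖q * q ^ i‖ = ‖q‖ ^ (i + 1) := by
      simp [map_mul, map_pow, pow_succ, mul_comm]
    rw [this]
    exact pow_lt_one₀ (norm_nonneg q) hq (Nat.succ_ne_zero i)
  rw [h1] at h2
  simp at h2

lemma gaussBinom_zero (q : ℂ) (hq : ‖q‖ < 1) (n : ℕ) :
    gaussBinom q n 0 = 1 := by
  simp [gaussBinom, qPoch_zero, div_self (qPoch_q_ne q hq n)]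

lemma gaussBinom_self (q : ℂ) (hq : ‖q‖ < 1) (n : ℕ) :
    gaussBinom q n n = 1 := by
  simp [gaussBinom, qPoch_zero, div_self (qPoch_q_ne q hq n)]

/-- q-Pascal rule: `[m+k+2, k+1] = [m+k+1, k+1] + q^(m+1) [m+k+1, k]`. -/
lemma gaussBinom_pascal (q : ℂ) (hq : ‖q‖ < 1) (m k : ℕ) :
    gaussBinom q (m + k + 2) (k + 1)
      = gaussBinom q (m + k + 1) (k + 1) + q ^ (m + 1) * gaussBinom q (m + k + 1) k := by
  have h1 : m + k + 2 - (k + 1) = m + 1 := by omega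
  have h2 : m + k + 1 - (k + 1) = m := by omega
  have h3 : m + k + 1 - k = m + 1 := by omega
  unfold gaussBinom
  rw [h1, h2, h3]
  rw [show m + k + 2 = (m + k + 1) + 1 from rfl, qPoch_succ]
  rw [show m + 1 = m + 1 from rfl, qPoch_succ q q m, qPoch_succ q q k]
  have hPm := qPoch_q_ne q hq m
  have hPk := qPoch_q_ne q hq k
  have hfm : (1 : ℂ) - q * q ^ m ≠ 0 := by
    have := qPoch_q_ne q hq (m + 1)
    rw [qPoch_succ] at this
    exact right_ne_zero_of_mul this
  have hfk : (1 : ℂ) - q * q ^ k ≠ 0 := by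
    have := qPoch_q_ne q hq (k + 1)
    rw [qPoch_succ] at this
    exact right_ne_zero_of_mul this
  field_simp
  ring

/-- The q-Vandermonde identity: `∑ₖ [n,k] aᵏ (b;q)ₖ (a;q)_{n-k} = (ab;q)ₙ`. -/
lemma q_vandermonde (q a b : ℂ) (hq : ‖q‖ < 1) (n : ℕ) :
    ∑ k ∈ Finset.range (n + 1),
      gaussBinom q n k * a ^ k * qPoch b q k * qPoch a q (n - k)
      = qPoch (a * b) q n := by
  induction n with
  | zero => simp [qPoch, gaussBinom]
  | succ n ih =>
    have split : ∑ k ∈ Finset.range (n + 1 + 1),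
        gaussBinom q (n + 1) k * a ^ k * qPoch b q k * qPoch a q (n + 1 - k)
      = (∑ k ∈ Finset.range (n + 1),
          gaussBinom q n k * a ^ k * qPoch b q k * qPoch a q (n + 1 - k))
        + ∑ k ∈ Finset.range (n + 1),
          q ^ (n - k) * gaussBinom q n k * a ^ (k + 1) * qPoch b q (k + 1)
            * qPoch a q (n - k) := by
      rw [Finset.sum_range_succ, Finset.sum_range_succ'
        (f := fun k => gaussBinom q (n + 1) k * a ^ k * qPoch b q k * qPoch a q (n + 1 - k)),
        Finset.sum_range_succ'
        (f := fun k => gaussBinom q n k * a ^ k * qPoch b q k * qPoch a q (n + 1 - k)),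
        Finset.sum_range_succ
        (f := fun k => q ^ (n - k) * gaussBinom q n k * a ^ (k + 1) * qPoch b q (k + 1)
            * qPoch a q (n - k))]
      have hmid : ∑ k ∈ Finset.range n,
          gaussBinom q (n + 1) (k + 1) * a ^ (k + 1) * qPoch b q (k + 1)
            * qPoch a q (n + 1 - (k + 1))
        = (∑ k ∈ Finset.range n,
            gaussBinom q n (k + 1) * a ^ (k + 1) * qPoch b q (k + 1)
              * qPoch a q (n + 1 - (k + 1)))
          + ∑ k ∈ Finset.range n,
            q ^ (n - k) * gaussBinom q n k * a ^ (k + 1) * qPoch b q (k + 1)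
              * qPoch a q (n - k) := by
        rw [← Finset.sum_add_distrib]
        refine Finset.sum_congr rfl fun k hk => ?_
        have hk' : k < n := Finset.mem_range.mp hk
        obtain ⟨m, hm⟩ : ∃ m, n = m + k + 1 := ⟨n - k - 1, by omega⟩
        subst hm
        have hp := gaussBinom_pascal q hq m k
        have e1 : m + k + 1 + 1 = m + k + 2 := rfl
        have e2 : m + k + 1 + 1 - (k + 1) = m + 1 := by omega
        have e3 : m + k + 1 - k = m + 1 := by omega
        rw [e1, e2, e3, hp]
        ring
      rw [hmid]
      have hlo : gaussBinom q (n + 1) 0 * a ^ 0 * qPoch b q 0 * qPoch a q (n + 1 - 0)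
          = gaussBinom q n 0 * a ^ 0 * qPoch b q 0 * qPoch a q (n + 1 - 0) := by
        rw [gaussBinom_zero q hq, gaussBinom_zero q hq]
      have hhi : gaussBinom q (n + 1) (n + 1) * a ^ (n + 1) * qPoch b q (n + 1)
            * qPoch a q (n + 1 - (n + 1))
          = q ^ (n - n) * gaussBinom q n n * a ^ (n + 1) * qPoch b q (n + 1)
            * qPoch a q (n - n) := by
        rw [gaussBinom_self q hq, gaussBinom_self q hq]
        simp
      rw [hlo, hhi]
      ring
    rw [split]
    have combine : ∀ k ∈ Finset.range (n + 1),
        gaussBinom q n k * a ^ k * qPoch b q k * qPoch a q (n + 1 - k)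
          + q ^ (n - k) * gaussBinom q n k * a ^ (k + 1) * qPoch b q (k + 1)
            * qPoch a q (n - k)
        = (1 - a * b * q ^ n)
            * (gaussBinom q n k * a ^ k * qPoch b q k * qPoch a q (n - k)) := by
      intro k hk
      have hk' : k ≤ n := Nat.lt_succ_iff.mp (Finset.mem_range.mp hk)
      have e1 : n + 1 - k = (n - k) + 1 := by omega
      rw [e1, qPoch_succ a q (n - k), qPoch_succ b q k]
      have e2 : q ^ (n - k) * q ^ k = q ^ n := by
        rw [← pow_add]; congr 1; omega
      linear_combination (-(gaussBinom q n k * a ^ (k + 1) * b * qPoch b q k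
        * qPoch a q (n - k))) * e2
    rw [← Finset.sum_add_distrib, Finset.sum_congr rfl combine, ← Finset.mul_sum, ih,
      qPoch_succ]
    ring

/-- For `|q| < 1`, `x ≠ 0` and `n ≥ 1`:
`∑_{j=0}^{n} [n,j]_q (x;q)_{n-j} x^j (1/x;q)_j = 0`. -/
theorem q_vandermonde_vanishes (q x : ℂ) (hq : ‖q‖ < 1) (hx : x ≠ 0)
    (n : ℕ) (hn : 1 ≤ n) :
    ∑ j ∈ Finset.range (n + 1),
      gaussBinom q n j * qPoch x q (n - j) * x ^ j * qPoch x⁻¹ q j = 0 := by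
  have h := q_vandermonde q x x⁻¹ hq n
  rw [mul_inv_cancel₀ hx] at h
  have hzero : qPoch 1 q n = 0 := by
    obtain ⟨m, rfl⟩ : ∃ m, n = m + 1 := ⟨n - 1, by omega⟩
    unfold qPoch
    rw [Finset.prod_range_succ']
    simp
  rw [hzero] at h
  rw [← h]
  exact Finset.sum_congr rfl fun j _ => by ring
end

section
/- Let L_n(x) = ∑_{k=0}^{n} C(n,k)·(−x)^k/k! denote the n-th Laguerre polynomial, and define the polynomials 𝓛_n by 𝓛_0(x) = 1, 𝓛_1(x) = x − 1, and 𝓛_n(x) = ∑_{j=2}^{n} C(n−2, j−2)·x^j/j! for n ≥ 2. Then for every x ∈ ℂ and every integer n ≥ 1, ∑_{k=0}^{n} L_{n−k}(x) · 𝓛_k(x) = 0; equivalently the infinite lower triangular matrices with (n,j) entries L_{n−j}(x) and 𝓛_{n−j}(x) respectively are mutually inverse. -/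
open Finset

/-- The `n`-th Laguerre polynomial `L_n(x) = ∑_{k=0}^n C(n,k) (-x)^k/k!`, as a function
on `ℂ`. -/
noncomputable def laguerre (n : ℕ) (x : ℂ) : ℂ :=
  ∑ k ∈ Finset.range (n + 1), (n.choose k : ℂ) * (-x) ^ k / (k.factorial : ℂ)

/-- The polynomials `𝓛_n`: `𝓛_0(x) = 1`, `𝓛_1(x) = x - 1`, and
`𝓛_n(x) = ∑_{j=2}^n C(n-2,j-2) x^j/j!` for `n ≥ 2`. -/
noncomputable def laguerreInv : ℕ → ℂ → ℂ
  | 0, _ => 1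
  | 1, x => x - 1
  | (n + 2), x =>
      ∑ j ∈ Finset.Icc 2 (n + 2), (n.choose (j - 2) : ℂ) * x ^ j / (j.factorial : ℂ)

/-- Vandermonde-type convolution: `∑_{k=0}^N C(k,b) C(N-k,a) = C(N+1,a+b+1)`. -/
lemma laguerre_vander (N a b : ℕ) :
    ∑ k ∈ Finset.range (N + 1), (k.choose b) * ((N - k).choose a)
      = (N + 1).choose (a + b + 1) := by
  induction N generalizing a with
  | zero =>
    rcases a with _ | a
    · rcases b with _ | b <;> simp [Nat.choose]
    · rcases b with _ | b <;>
        simp [Nat.choose_eq_zero_of_lt, Nat.lt_succ_iff, Nat.choose_zero_succ,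
          Nat.choose_eq_zero_of_lt (show 1 < a + 1 + 1 by omega)]
  | succ N ih =>
    rcases a with _ | a
    · simp only [Nat.choose_zero_right, mul_one, Nat.zero_add]
      have h := Nat.sum_Icc_choose (N + 1) b
      rw [← h]
      refine (Finset.sum_subset ?_ ?_).symm
      · intro m hm
        simp only [Finset.mem_Icc, Finset.mem_range] at hm ⊢; omega
      · intro m hm hmn
        simp only [Finset.mem_range, Finset.mem_Icc, not_and, not_le] at hm hmn
        exact Nat.choose_eq_zero_of_lt (by omega)
    · rw [Finset.sum_range_succ]
      have : ∀ k ∈ Finset.range (N + 1),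
          k.choose b * ((N + 1 - k).choose (a + 1))
            = k.choose b * ((N - k).choose (a + 1)) + k.choose b * ((N - k).choose a) := by
        intro k hk
        simp only [Finset.mem_range, Nat.lt_succ_iff] at hk
        rw [show N + 1 - k = (N - k) + 1 by omega, Nat.choose_succ_succ, Nat.mul_add,
          Nat.add_comm (k.choose b * (N - k).choose a)]
      rw [Finset.sum_congr rfl this, Finset.sum_add_distrib, ih, ih,
        Nat.sub_self, show Nat.choose 0 (a+1) = 0 from rfl, Nat.mul_zero, Nat.add_zero]
      rw [show a + 1 + b + 1 = (a + b + 1) + 1 by ring, Nat.choose_succ_succ (N+1)]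
      exact Nat.add_comm _ _

lemma laguerre_ext (x : ℂ) {m N : ℕ} (h : m ≤ N) :
    laguerre m x = ∑ a ∈ Finset.range (N + 1), (m.choose a : ℂ) * (-x) ^ a / (a.factorial : ℂ) := by
  refine Finset.sum_subset (Finset.range_subset_range.2 (by omega)) ?_
  intro a _ ha
  simp only [Finset.mem_range, not_lt] at ha
  rw [Nat.choose_eq_zero_of_lt (by omega)]
  simp

lemma laguerre_alt_sum (m : ℕ) (hm : m ≠ 0) :
    ∑ i ∈ Finset.range (m + 1), (-1 : ℂ) ^ i * (m.choose i : ℂ) = 0 := by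
  have h := Int.alternating_sum_range_choose (n := m)
  rw [if_neg hm] at h
  calc ∑ i ∈ Finset.range (m + 1), (-1 : ℂ) ^ i * (m.choose i : ℂ)
      = ((∑ i ∈ Finset.range (m + 1), (-1 : ℤ) ^ i * (m.choose i : ℤ) : ℤ) : ℂ) := by
        push_cast; ring
    _ = 0 := by rw [h]; norm_num

/-- The key convolution identity `∑_{k=0}^n L_{n-k}(x) L_k(-x) = n + 1`. -/
lemma laguerre_conv_eq (x : ℂ) (n : ℕ) :
    ∑ k ∈ Finset.range (n + 1), laguerre (n - k) x * laguerre k (-x) = (n : ℂ) + 1 := by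
  have h1 : ∀ k ∈ Finset.range (n + 1), laguerre (n - k) x * laguerre k (-x)
      = ∑ a ∈ Finset.range (n + 1), ∑ b ∈ Finset.range (n + 1),
          ((n - k).choose a : ℂ) * (-x) ^ a / (a.factorial : ℂ)
            * ((k.choose b : ℂ) * (-(-x)) ^ b / (b.factorial : ℂ)) := by
    intro k hk
    simp only [Finset.mem_range, Nat.lt_succ_iff] at hk
    rw [laguerre_ext x (show n - k ≤ n by omega), laguerre_ext (-x) hk,
      Finset.sum_mul_sum]
  rw [Finset.sum_congr rfl h1, Finset.sum_comm]
  have h2 : ∀ a ∈ Finset.range (n + 1),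
      ∑ k ∈ Finset.range (n + 1), ∑ b ∈ Finset.range (n + 1),
          ((n - k).choose a : ℂ) * (-x) ^ a / (a.factorial : ℂ)
            * ((k.choose b : ℂ) * (-(-x)) ^ b / (b.factorial : ℂ))
      = ∑ b ∈ Finset.range (n + 1),
          ((-x) ^ a / (a.factorial : ℂ) * (x ^ b / (b.factorial : ℂ)))
            * (((n + 1).choose (a + b + 1) : ℂ)) := by
    intro a _
    rw [Finset.sum_comm]
    refine Finset.sum_congr rfl fun b _ => ?_
    have hv : ((∑ k ∈ Finset.range (n + 1), (k.choose b) * ((n - k).choose a) : ℕ) : ℂ)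
        = (((n + 1).choose (a + b + 1) : ℕ) : ℂ) := by rw [laguerre_vander]
    push_cast at hv
    rw [← hv, Finset.mul_sum]
    refine Finset.sum_congr rfl fun k _ => ?_
    ring
  rw [Finset.sum_congr rfl h2, ← Finset.sum_product']
  rw [← Finset.sum_fiberwise_of_maps_to (g := fun p => p.1 + p.2)
    (t := Finset.range (2 * n + 1)) (fun p hp => by
      simp only [Finset.mem_product, Finset.mem_range] at hp ⊢; omega)]
  have h3 : ∀ m ∈ Finset.range (2 * n + 1),
      (∑ p ∈ (Finset.range (n+1) ×ˢ Finset.range (n+1)).filter (fun p => p.1 + p.2 = m),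
        ((-x) ^ p.1 / (p.1.factorial : ℂ) * (x ^ p.2 / (p.2.factorial : ℂ)))
          * (((n + 1).choose (p.1 + p.2 + 1) : ℂ)))
      = if m = 0 then (n : ℂ) + 1 else 0 := by
    intro m _
    have hsub : ((Finset.range (n+1) ×ˢ Finset.range (n+1)).filter (fun p => p.1 + p.2 = m))
        ⊆ Finset.HasAntidiagonal.antidiagonal m := by
      intro p hp
      simp only [Finset.mem_filter] at hp
      simpa [Finset.HasAntidiagonal.mem_antidiagonal] using hp.2
    rw [Finset.sum_subset hsub ?zero]
    case zero =>
      intro p hp hnp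
      have hpm : p.1 + p.2 = m := Finset.HasAntidiagonal.mem_antidiagonal.1 hp
      simp only [Finset.mem_filter, Finset.mem_product, Finset.mem_range, hpm,
        and_true, not_and, not_lt] at hnp
      have : n < m := by omega
      rw [hpm, Nat.choose_eq_zero_of_lt (by omega)]
      simp
    rw [Finset.Nat.sum_antidiagonal_eq_sum_range_succ_mk]
    rcases Nat.eq_zero_or_pos m with hm | hm
    · subst hm; simp [Nat.choose_one_right]
    · rw [if_neg (by omega)]
      have hterm : ∀ i ∈ Finset.range (m + 1),
          ((-x) ^ i / (i.factorial : ℂ) * (x ^ (m - i) / ((m - i).factorial : ℂ)))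
            * (((n + 1).choose (i + (m - i) + 1) : ℂ))
          = ((-1 : ℂ) ^ i * (m.choose i : ℂ))
            * (x ^ m / (m.factorial : ℂ) * (((n + 1).choose (m + 1) : ℂ))) := by
        intro i hi
        simp only [Finset.mem_range, Nat.lt_succ_iff] at hi
        rw [show i + (m - i) = m by omega]
        rw [Nat.cast_choose ℂ hi]
        rw [neg_pow, show x ^ m = x ^ i * x ^ (m - i) by rw [← pow_add]; congr 1; omega]
        have hf1 : (i.factorial : ℂ) ≠ 0 := Nat.cast_ne_zero.2 i.factorial_ne_zero
        have hf2 : ((m - i).factorial : ℂ) ≠ 0 := Nat.cast_ne_zero.2 (m - i).factorial_ne_zero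
        have hf3 : (m.factorial : ℂ) ≠ 0 := Nat.cast_ne_zero.2 m.factorial_ne_zero
        field_simp
      rw [Finset.sum_congr rfl hterm, ← Finset.sum_mul, laguerre_alt_sum m (by omega), zero_mul]
  rw [Finset.sum_congr rfl h3, Finset.sum_ite_eq' (Finset.range (2*n+1)) 0 (fun _ => (n:ℂ)+1)]
  rw [if_pos (by simp)]

/-- `𝓛_{n+2}(x) = L_{n+2}(-x) - 2 L_{n+1}(-x) + L_n(-x)`. -/
lemma laguerreInv_eq (x : ℂ) (n : ℕ) :
    laguerreInv (n + 2) x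
      = laguerre (n + 2) (-x) - 2 * laguerre (n + 1) (-x) + laguerre n (-x) := by
  have key : ∀ j : ℕ, ((n+2).choose j : ℂ) - 2 * ((n+1).choose j : ℂ) + (n.choose j : ℂ)
      = if 2 ≤ j then (n.choose (j-2) : ℂ) else 0 := by
    intro j
    match j with
    | 0 => simp; norm_num
    | 1 =>
      rw [if_neg (by omega)]
      simp only [Nat.choose_one_right]
      push_cast; ring
    | (j+2) =>
      rw [if_pos (by omega)]
      have hnat : (n+2).choose (j+2) + n.choose (j+2)
          = 2 * (n+1).choose (j+2) + n.choose j := by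
        have e1 : (n+2).choose (j+2) = (n+1).choose (j+1) + (n+1).choose (j+2) :=
          Nat.choose_succ_succ _ _
        have e2 : (n+1).choose (j+2) = n.choose (j+1) + n.choose (j+2) :=
          Nat.choose_succ_succ _ _
        have e3 : (n+1).choose (j+1) = n.choose j + n.choose (j+1) :=
          Nat.choose_succ_succ _ _
        omega
      have hc := congrArg (fun t : ℕ => (t : ℂ)) hnat
      push_cast at hc
      simp only [Nat.add_sub_cancel]
      linear_combination hc
  rw [laguerre_ext (-x) (show n+2 ≤ n+2 from le_refl _),
    laguerre_ext (-x) (show n+1 ≤ n+2 by omega),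
    laguerre_ext (-x) (show n ≤ n+2 by omega), Finset.mul_sum,
    ← Finset.sum_sub_distrib, ← Finset.sum_add_distrib]
  have hterm : ∀ j ∈ Finset.range (n + 3),
      ((n+2).choose j : ℂ) * (-(-x)) ^ j / (j.factorial : ℂ)
        - 2 * (((n+1).choose j : ℂ) * (-(-x)) ^ j / (j.factorial : ℂ))
        + (n.choose j : ℂ) * (-(-x)) ^ j / (j.factorial : ℂ)
      = (if 2 ≤ j then (n.choose (j-2) : ℂ) else 0) * x ^ j / (j.factorial : ℂ) := by
    intro j _
    rw [← key j, neg_neg]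
    ring
  rw [Finset.sum_congr rfl hterm]
  show laguerreInv (n + 2) x = _
  simp only [laguerreInv]
  have h1 : ∑ j ∈ Finset.Icc 2 (n+2), (n.choose (j-2) : ℂ) * x ^ j / (j.factorial : ℂ)
      = ∑ j ∈ Finset.Icc 2 (n+2),
          (if 2 ≤ j then (n.choose (j-2) : ℂ) else 0) * x ^ j / (j.factorial : ℂ) := by
    refine Finset.sum_congr rfl fun j hj => ?_
    simp only [Finset.mem_Icc] at hj
    rw [if_pos hj.1]
  rw [h1]
  refine Finset.sum_subset ?_ ?_
  · intro j hj; simp only [Finset.mem_Icc] at hj; simp only [Finset.mem_range]; omega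
  · intro j hj hj2
    simp only [Finset.mem_range] at hj
    simp only [Finset.mem_Icc, not_and, not_le] at hj2
    rw [if_neg (by omega), zero_mul, zero_div]

lemma laguerreInv_eq' (x : ℂ) (k : ℕ) :
    laguerreInv k x = laguerre k (-x)
      - 2 * (if 1 ≤ k then laguerre (k-1) (-x) else 0)
      + (if 2 ≤ k then laguerre (k-2) (-x) else 0) := by
  match k with
  | 0 => simp [laguerreInv, laguerre]
  | 1 =>
    simp only [laguerreInv, if_pos (le_refl 1), if_neg (by omega : ¬ (2:ℕ) ≤ 1)]
    simp [laguerre, Finset.sum_range_succ]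
    ring
  | (k+2) =>
    rw [laguerreInv_eq]
    simp only [if_pos (by omega : 1 ≤ k + 2), if_pos (by omega : 2 ≤ k + 2)]
    norm_num

/-- For every `x ∈ ℂ` and `n ≥ 1`, `∑_{k=0}^{n} L_{n-k}(x) 𝓛_k(x) = 0`; equivalently,
the lower triangular matrices with entries `L_{n-j}(x)` and `𝓛_{n-j}(x)` are mutually
inverse. -/
theorem laguerre_inverse (x : ℂ) :
    (∀ n : ℕ, 1 ≤ n →
      ∑ k ∈ Finset.range (n + 1), laguerre (n - k) x * laguerreInv k x = 0) ∧
    (∀ n j : ℕ, j ≤ n →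
      ∑ k ∈ Finset.Icc j n, laguerre (n - k) x * laguerreInv (k - j) x =
        if n = j then 1 else 0) := by
  have part1 : ∀ n : ℕ, 1 ≤ n →
      ∑ k ∈ Finset.range (n + 1), laguerre (n - k) x * laguerreInv k x = 0 := by
    intro n hn
    match n, hn with
    | 1, _ =>
      simp [laguerre, laguerreInv, Finset.sum_range_succ]
      ring
    | (m+2), _ =>
      have hsplit : ∀ k ∈ Finset.range (m+2+1), laguerre (m+2-k) x * laguerreInv k x
          = laguerre (m+2-k) x * laguerre k (-x)
            - 2 * (laguerre (m+2-k) x * (if 1 ≤ k then laguerre (k-1) (-x) else 0))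
            + laguerre (m+2-k) x * (if 2 ≤ k then laguerre (k-2) (-x) else 0) := by
        intro k _; rw [laguerreInv_eq']; ring
      rw [Finset.sum_congr rfl hsplit, Finset.sum_add_distrib, Finset.sum_sub_distrib,
        ← Finset.mul_sum]
      have hA := laguerre_conv_eq x (m+2)
      have hB : ∑ k ∈ Finset.range (m+2+1),
          laguerre (m+2-k) x * (if 1 ≤ k then laguerre (k-1) (-x) else 0)
          = ((m+1 : ℕ) : ℂ) + 1 := by
        rw [Finset.sum_range_succ']
        have hz : laguerre (m+2-0) x * (if 1 ≤ 0 then laguerre (0-1) (-x) else 0) = 0 := by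
          rw [if_neg (by omega), mul_zero]
        rw [hz, add_zero]
        have hcg : ∀ i ∈ Finset.range (m+2),
            laguerre (m+2-(i+1)) x * (if 1 ≤ i+1 then laguerre (i+1-1) (-x) else 0)
              = laguerre (m+1-i) x * laguerre i (-x) := by
          intro i _
          rw [if_pos (by omega), show m+2-(i+1) = m+1-i from by omega,
            show i+1-1 = i from rfl]
        rw [Finset.sum_congr rfl hcg]
        exact laguerre_conv_eq x (m+1)
      have hC : ∑ k ∈ Finset.range (m+2+1),
          laguerre (m+2-k) x * (if 2 ≤ k then laguerre (k-2) (-x) else 0)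
          = ((m : ℕ) : ℂ) + 1 := by
        rw [Finset.sum_range_succ', Finset.sum_range_succ']
        have hz0 : laguerre (m+2-0) x * (if 2 ≤ 0 then laguerre (0-2) (-x) else 0) = 0 := by
          rw [if_neg (by omega), mul_zero]
        have hz1 : laguerre (m+2-(0+1)) x * (if 2 ≤ 0+1 then laguerre (0+1-2) (-x) else 0) = 0 := by
          rw [if_neg (by omega), mul_zero]
        rw [hz0, hz1, add_zero, add_zero]
        have hcg : ∀ i ∈ Finset.range (m+1),
            laguerre (m+2-(i+1+1)) x * (if 2 ≤ i+1+1 then laguerre (i+1+1-2) (-x) else 0)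
              = laguerre (m-i) x * laguerre i (-x) := by
          intro i _
          rw [if_pos (by omega), show m+2-(i+1+1) = m-i from by omega,
            show i+1+1-2 = i from rfl]
        rw [Finset.sum_congr rfl hcg]
        exact laguerre_conv_eq x m
      rw [hA, hB, hC]
      push_cast
      ring
  refine ⟨part1, ?_⟩
  intro n j hj
  rw [← Finset.Ico_add_one_right_eq_Icc, Finset.sum_Ico_eq_sum_range,
    show n + 1 - j = (n - j) + 1 from by omega]
  have hcg : ∀ i ∈ Finset.range ((n-j)+1),
      laguerre (n - (j+i)) x * laguerreInv ((j+i) - j) x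
        = laguerre ((n-j) - i) x * laguerreInv i x := by
    intro i _
    rw [show n - (j+i) = (n-j) - i from by omega, show (j+i) - j = i from by omega]
  rw [Finset.sum_congr rfl hcg]
  by_cases hnj : n = j
  · rw [if_pos hnj]
    subst hnj
    simp [laguerre, laguerreInv]
  · rw [if_neg hnj]
    exact part1 (n-j) (by omega)
end
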